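/- Let n and k be positive integers and let p = (⌈(n-1)/(2k)⌉ - 1)·k + 1. Then the geodetic number of the Kneser graph K(2n+k,n) satisfies gn(K(2n+k,n)) ≤ 1 + Σ_{i=p}^{p+H(n,k)} C(n,i)·C(n+k, n-i), where C(a,b) denotes the binomial coefficient. -/

import Mathlib

/-- The Kneser graph `K(m, n)`: vertices are the `n`-element subsets of an `m`-element
ground set, with edges between disjoint sets. -/
def KneserGraph (m n : ℕ) : SimpleGraph {s : Finset (Fin m) // s.card = n} where
  Adj u v := Disjoint u.1 v.1 ∧ u ≠ v
  symm := ⟨fun u v ⟨h, hne⟩ => ⟨h.symm, hne.symm⟩⟩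
  loopless := ⟨fun u ⟨_, h⟩ => h rfl⟩

/-- The geodetic interval `I[u,v]`: all vertices lying on some shortest `u,v`-path. -/
def geodInterval {V : Type*} (G : SimpleGraph V) (u v : V) : Set V :=
  {w | G.dist u w + G.dist w v = G.dist u v}

/-- `I[W] = ⋃_{u,v ∈ W} I[u,v]`. -/
def geodIntervalSet {V : Type*} (G : SimpleGraph V) (W : Set V) : Set V :=
  ⋃ (u ∈ W) (v ∈ W), geodInterval G u v

/-- `W` is a geodetic set if `I[W] = V(G)`. -/
def IsGeodeticSet {V : Type*} (G : SimpleGraph V) (W : Set V) : Prop :=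
  geodIntervalSet G W = Set.univ

/-- `W` is geodetically convex if `I[W] = W`. -/
def IsGConvex {V : Type*} (G : SimpleGraph V) (W : Set V) : Prop :=
  geodIntervalSet G W = W

/-- The geodetic hull `H[W]`: the smallest g-convex set containing `W`. -/
def geodHull {V : Type*} (G : SimpleGraph V) (W : Set V) : Set V :=
  ⋂₀ {C | IsGConvex G C ∧ W ⊆ C}

/-- `W` is a geodetic hull set if `H[W] = V(G)`. -/
def IsGeodHullSet {V : Type*} (G : SimpleGraph V) (W : Set V) : Prop :=
  geodHull G W = Set.univ

/-- The geodetic number: minimum cardinality of a geodetic set. -/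
noncomputable def geodeticNumber {V : Type*} (G : SimpleGraph V) : ℕ :=
  sInf {m | ∃ W : Set V, IsGeodeticSet G W ∧ W.ncard = m}

/-- The geodetic hull number: minimum cardinality of a geodetic hull set. -/
noncomputable def geodHullNumber {V : Type*} (G : SimpleGraph V) : ℕ :=
  sInf {m | ∃ W : Set V, IsGeodHullSet G W ∧ W.ncard = m}

/-- The function `H(n,k)` from the paper. -/
def Hfun (n k : ℕ) : ℕ := if n % k ≤ 1 then n % k + k - 2 else n % k - 2

/-- `p = (⌈(n-1)/(2k)⌉ - 1)·k + 1`, computed in `ℤ`. -/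
def pInt (n k : ℕ) : ℤ := (⌈((n : ℚ) - 1) / (2 * k)⌉ - 1) * k + 1

/-- Binomial coefficient with an integer lower index, zero when the index is negative. -/
def zchoose (a : ℕ) (b : ℤ) : ℕ := if b < 0 then 0 else a.choose b.toNat


set_option linter.unusedVariables false
set_option maxHeartbeats 1000000


def cdiv (a k : ℕ) : ℕ := (a + k - 1) / k

lemma cdiv_le_iff {k : ℕ} (hk : 0 < k) {a t : ℕ} : cdiv a k ≤ t ↔ a ≤ t * k := by
  unfold cdiv
  rw [Nat.div_le_iff_le_mul_add_pred hk, Nat.mul_comm]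
  generalize t * k = m
  omega

lemma lt_cdiv_iff {k : ℕ} (hk : 0 < k) {a t : ℕ} : t < cdiv a k ↔ t * k < a := by
  rw [← Nat.not_le, ← Nat.not_le, cdiv_le_iff hk]

lemma cdiv_spec {k : ℕ} (hk : 0 < k) (a : ℕ) :
    a ≤ cdiv a k * k ∧ cdiv a k * k < a + k := by
  constructor
  · exact (cdiv_le_iff hk).mp le_rfl
  · rcases Nat.eq_zero_or_pos (cdiv a k) with h | h
    · rw [h]; omega
    · have h2 : ¬ (cdiv a k ≤ cdiv a k - 1) := by omega
      rw [cdiv_le_iff hk] at h2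
      have h3 : (cdiv a k - 1) * k = cdiv a k * k - k := by
        rw [Nat.sub_mul, Nat.one_mul]
      have h4 : k ≤ cdiv a k * k := by
        calc k = 1 * k := (Nat.one_mul k).symm
        _ ≤ cdiv a k * k := Nat.mul_le_mul_right k h
      omega

lemma cdiv_eq_iff {k : ℕ} (hk : 0 < k) {a t : ℕ} :
    cdiv a k = t ↔ a ≤ t * k ∧ t * k < a + k := by
  constructor
  · rintro rfl; exact cdiv_spec hk a
  · rintro ⟨h1, h2⟩
    obtain ⟨g1, g2⟩ := cdiv_spec hk a
    rcases Nat.lt_trichotomy (cdiv a k) t with h | h | h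
    · have : (cdiv a k + 1) * k ≤ t * k := Nat.mul_le_mul_right k (by omega)
      rw [Nat.add_mul, Nat.one_mul] at this; omega
    · exact h
    · have : (t + 1) * k ≤ cdiv a k * k := Nat.mul_le_mul_right k (by omega)
      rw [Nat.add_mul, Nat.one_mul] at this; omega

lemma cdiv_pos_iff {k : ℕ} (hk : 0 < k) {a : ℕ} : 0 < cdiv a k ↔ 0 < a := by
  rw [lt_cdiv_iff hk, Nat.zero_mul]


namespace KneserAux

variable {n k : ℕ}

lemma eq_of_inter_card (a b : {s : Finset (Fin (2*n+k)) // s.card = n})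
    (h : n ≤ (a.1 ∩ b.1).card) : a = b := by
  have h1 : a.1 ∩ b.1 ⊆ a.1 := Finset.inter_subset_left
  have h2 : (a.1 ∩ b.1).card ≤ a.1.card := Finset.card_le_card h1
  have ha2 := a.2
  have h3 : a.1 ∩ b.1 = a.1 := Finset.eq_of_subset_of_card_le h1 (by omega)
  have h4 : a.1 ⊆ b.1 := by rw [← h3]; exact Finset.inter_subset_right
  exact Subtype.ext (Finset.eq_of_subset_of_card_le h4 (by rw [a.2, b.2]))

lemma ne_of_disjoint (hn : 0 < n) (a b : {s : Finset (Fin (2*n+k)) // s.card = n})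
    (h : Disjoint a.1 b.1) : a ≠ b := by
  rintro rfl
  have h1 : a.1 = ∅ := (Finset.disjoint_self_iff_empty a.1).mp h
  have h2 := a.2
  rw [h1] at h2
  simp at h2
  omega

lemma adj_of_disjoint (hn : 0 < n) (a b : {s : Finset (Fin (2*n+k)) // s.card = n})
    (h : Disjoint a.1 b.1) : (KneserGraph (2*n+k) n).Adj a b :=
  ⟨h, ne_of_disjoint hn a b h⟩

lemma card_univ_fin : (Finset.univ : Finset (Fin (2*n+k))).card = 2*n+k := by
  simp

lemma exists_mid (hn : 0 < n) (a a' : {s : Finset (Fin (2*n+k)) // s.card = n})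
    (h : (a.1 ∪ a'.1).card ≤ n + k) :
    ∃ c : {s : Finset (Fin (2*n+k)) // s.card = n},
      Disjoint a.1 c.1 ∧ Disjoint a'.1 c.1 := by
  have hcard : n ≤ ((Finset.univ : Finset (Fin (2*n+k))) \ (a.1 ∪ a'.1)).card := by
    rw [Finset.card_sdiff_of_subset (Finset.subset_univ _), card_univ_fin]
    omega
  obtain ⟨c, hsub, hcardc⟩ := Finset.exists_subset_card_eq hcard
  refine ⟨⟨c, hcardc⟩, ?_, ?_⟩ <;>
  · rw [Finset.disjoint_right]
    intro x hx hxa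
    have := hsub hx
    simp only [Finset.mem_sdiff, Finset.mem_union] at this
    tauto

lemma walk_even (hn : 0 < n) (hk : 0 < k) :
    ∀ m : ℕ, ∀ a b : {s : Finset (Fin (2*n+k)) // s.card = n},
      n ≤ (a.1 ∩ b.1).card + m * k →
      ∃ w : (KneserGraph (2*n+k) n).Walk a b, w.length ≤ 2*m := by
  intro m
  induction m with
  | zero =>
    intro a b h
    rw [Nat.zero_mul, Nat.add_zero] at h
    rcases eq_of_inter_card a b h
    exact ⟨SimpleGraph.Walk.nil, by simp⟩
  | succ m ih =>
    intro a b h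
    by_cases hab : a = b
    · rcases hab; exact ⟨SimpleGraph.Walk.nil, by simp⟩
    set s := (a.1 ∩ b.1).card with hs
    by_cases hle : n ≤ s + m * k
    · obtain ⟨w, hw⟩ := ih a b hle
      exact ⟨w, by omega⟩
    push_neg at hle
    set δ := min k (n - s) with hδ
    have hcab : (a.1 ∩ b.1).card ≤ n := by
      calc (a.1 ∩ b.1).card ≤ a.1.card := Finset.card_le_card Finset.inter_subset_left
      _ = n := a.2
    have hba : (b.1 \ a.1).card = n - s := by
      have := Finset.card_sdiff_add_card_inter b.1 a.1
      rw [b.2, Finset.inter_comm] at this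
      omega
    have hab' : (a.1 \ b.1).card = n - s := by
      have := Finset.card_sdiff_add_card_inter a.1 b.1
      rw [a.2] at this
      omega
    obtain ⟨P, hPsub, hPcard⟩ := Finset.exists_subset_card_eq
      (show δ ≤ (b.1 \ a.1).card by omega)
    obtain ⟨Q, hQsub, hQcard⟩ := Finset.exists_subset_card_eq
      (show δ ≤ (a.1 \ b.1).card by omega)
    have hPa : Disjoint P a.1 := by
      rw [Finset.disjoint_right]
      intro x hx hxP
      have := hPsub hxP
      simp only [Finset.mem_sdiff] at this
      exact this.2 hx
    have hQa : Q ⊆ a.1 := hQsub.trans Finset.sdiff_subset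
    have ha'card : ((a.1 \ Q) ∪ P).card = n := by
      rw [Finset.card_union_of_disjoint, Finset.card_sdiff_of_subset hQa, a.2, hPcard, hQcard]
      · omega
      · exact (hPa.mono_right Finset.sdiff_subset).symm
    set a' : {s : Finset (Fin (2*n+k)) // s.card = n} := ⟨(a.1 \ Q) ∪ P, ha'card⟩ with ha'
    have hkey : (a.1 ∩ b.1) ∪ P ⊆ a'.1 ∩ b.1 := by
      intro x hx
      simp only [ha', Finset.mem_union, Finset.mem_inter] at hx ⊢
      rcases hx with ⟨hxa, hxb⟩ | hxP
      · refine ⟨Or.inl ?_, hxb⟩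
        simp only [Finset.mem_sdiff]
        refine ⟨hxa, fun hxQ => ?_⟩
        have := hQsub hxQ
        simp only [Finset.mem_sdiff] at this
        exact this.2 hxb
      · refine ⟨Or.inr hxP, ?_⟩
        have := hPsub hxP
        simp only [Finset.mem_sdiff] at this
        exact this.1
    have hcard2 : s + δ ≤ (a'.1 ∩ b.1).card := by
      calc s + δ = ((a.1 ∩ b.1) ∪ P).card := by
            rw [Finset.card_union_of_disjoint, hPcard]
            exact (hPa.mono_right Finset.inter_subset_left).symm
      _ ≤ (a'.1 ∩ b.1).card := Finset.card_le_card hkey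
    obtain ⟨w', hw'⟩ := ih a' b (by
      have hmk : n ≤ s + (m+1)*k := h
      rw [Nat.add_mul, Nat.one_mul] at hmk
      omega)
    have hun : (a.1 ∪ a'.1).card ≤ n + k := by
      have : a.1 ∪ a'.1 = a.1 ∪ P := by
        rw [ha']
        ext x
        simp only [Finset.mem_union, Finset.mem_sdiff]
        tauto
      rw [this]
      calc (a.1 ∪ P).card ≤ a.1.card + P.card := Finset.card_union_le _ _
      _ = n + δ := by rw [a.2, hPcard]
      _ ≤ n + k := by omega
    obtain ⟨c, hc1, hc2⟩ := exists_mid hn a a' hun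
    exact ⟨SimpleGraph.Walk.cons (adj_of_disjoint hn a c hc1)
      (SimpleGraph.Walk.cons ((adj_of_disjoint hn a' c hc2).symm) w'), by
        simp only [SimpleGraph.Walk.length_cons]
        omega⟩

lemma walk_odd (hn : 0 < n) (hk : 0 < k) (a b : {s : Finset (Fin (2*n+k)) // s.card = n}) :
    ∃ w : (KneserGraph (2*n+k) n).Walk a b,
      w.length ≤ 2 * cdiv (a.1 ∩ b.1).card k + 1 := by
  set s := (a.1 ∩ b.1).card with hs
  have hcab : s ≤ n := by
    calc s ≤ a.1.card := Finset.card_le_card Finset.inter_subset_left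
    _ = n := a.2
  have hba : (b.1 \ a.1).card = n - s := by
    have := Finset.card_sdiff_add_card_inter b.1 a.1
    rw [b.2, Finset.inter_comm] at this
    omega
  have hsub : b.1 \ a.1 ⊆ Finset.univ \ a.1 := by
    intro x hx
    simp only [Finset.mem_sdiff] at hx ⊢
    exact ⟨Finset.mem_univ x, hx.2⟩
  have hcu : (Finset.univ \ a.1).card = n + k := by
    rw [Finset.card_sdiff_of_subset (Finset.subset_univ _), card_univ_fin, a.2]
    omega
  obtain ⟨c, hc1, hc2, hc3⟩ := Finset.exists_subsuperset_card_eq hsub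
    (by omega) (by omega : n ≤ (Finset.univ \ a.1).card)
  set cv : {s : Finset (Fin (2*n+k)) // s.card = n} := ⟨c, hc3⟩ with hcv
  have hdisj : Disjoint a.1 cv.1 := by
    rw [Finset.disjoint_left]
    intro x hx hxc
    have := hc2 hxc
    simp only [Finset.mem_sdiff] at this
    exact this.2 hx
  have hcb : n - s ≤ (cv.1 ∩ b.1).card := by
    rw [← hba]
    apply Finset.card_le_card
    intro x hx
    simp only [Finset.mem_sdiff] at hx
    simp only [Finset.mem_inter]
    exact ⟨hc1 (by simp [Finset.mem_sdiff, hx.1, hx.2]), hx.1⟩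
  have hspec := cdiv_spec hk s
  obtain ⟨w', hw'⟩ := walk_even hn hk (cdiv s k) cv b (by omega)
  exact ⟨SimpleGraph.Walk.cons (adj_of_disjoint hn a cv hdisj) w', by
    simp only [SimpleGraph.Walk.length_cons]
    omega⟩

lemma edge_sum_le (a x b : {s : Finset (Fin (2*n+k)) // s.card = n})
    (hdis : Disjoint a.1 x.1) :
    (a.1 ∩ b.1).card + (x.1 ∩ b.1).card ≤ n := by
  have hd : Disjoint (a.1 ∩ b.1) (x.1 ∩ b.1) :=
    hdis.mono Finset.inter_subset_left Finset.inter_subset_left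
  calc (a.1 ∩ b.1).card + (x.1 ∩ b.1).card = ((a.1 ∩ b.1) ∪ (x.1 ∩ b.1)).card :=
        (Finset.card_union_of_disjoint hd).symm
  _ ≤ b.1.card := Finset.card_le_card (by
        intro y hy
        simp only [Finset.mem_union, Finset.mem_inter] at hy
        tauto)
  _ = n := b.2

lemma edge_sum_ge (a x b : {s : Finset (Fin (2*n+k)) // s.card = n})
    (hdis : Disjoint a.1 x.1) :
    n ≤ (a.1 ∩ b.1).card + (x.1 ∩ b.1).card + k := by
  have h1 : (b.1 ∩ (a.1 ∪ x.1)).card + (b.1 \ (a.1 ∪ x.1)).card = n := by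
    rw [Finset.card_inter_add_card_sdiff, b.2]
  have h2 : (b.1 ∩ (a.1 ∪ x.1)).card ≤ (a.1 ∩ b.1).card + (x.1 ∩ b.1).card := by
    rw [Finset.inter_union_distrib_left]
    calc ((b.1 ∩ a.1) ∪ (b.1 ∩ x.1)).card ≤ (b.1 ∩ a.1).card + (b.1 ∩ x.1).card :=
          Finset.card_union_le _ _
    _ = (a.1 ∩ b.1).card + (x.1 ∩ b.1).card := by rw [Finset.inter_comm b.1 a.1,
          Finset.inter_comm b.1 x.1]
  have h3 : (b.1 \ (a.1 ∪ x.1)).card ≤ k := by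
    have hsub : b.1 \ (a.1 ∪ x.1) ⊆ Finset.univ \ (a.1 ∪ x.1) := by
      intro y hy
      simp only [Finset.mem_sdiff] at hy ⊢
      exact ⟨Finset.mem_univ y, hy.2⟩
    have hcu : (Finset.univ \ (a.1 ∪ x.1)).card = k := by
      rw [Finset.card_sdiff_of_subset (Finset.subset_univ _), card_univ_fin,
        Finset.card_union_of_disjoint hdis, a.2, x.2]
      omega
    calc (b.1 \ (a.1 ∪ x.1)).card ≤ (Finset.univ \ (a.1 ∪ x.1)).card :=
          Finset.card_le_card hsub
    _ = k := hcu
  omega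

lemma walk_lower (hn : 0 < n) (hk : 0 < k)
    {a b : {s : Finset (Fin (2*n+k)) // s.card = n}}
    (w : (KneserGraph (2*n+k) n).Walk a b) : ∀ t : ℕ,
    (w.length = 2*t → n ≤ (a.1 ∩ b.1).card + t*k) ∧
    (w.length = 2*t+1 → (a.1 ∩ b.1).card ≤ t*k) := by
  induction w with
  | nil =>
    intro t
    constructor
    · intro ht
      simp only [SimpleGraph.Walk.length_nil] at ht
      rw [Finset.inter_self]
      omega
    · intro ht
      simp only [SimpleGraph.Walk.length_nil] at ht
      omega
  | @cons a x b h q ih =>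
    intro t
    have hlen : (SimpleGraph.Walk.cons h q).length = q.length + 1 :=
      SimpleGraph.Walk.length_cons h q
    have hge := edge_sum_ge a x b h.1
    have hle := edge_sum_le a x b h.1
    constructor
    · intro ht
      have ht1 : 1 ≤ t := by omega
      have hq : q.length = 2*(t-1)+1 := by omega
      have := (ih (t-1)).2 hq
      have hmul : (t-1)*k + k = t*k := by
        rw [Nat.sub_mul, Nat.one_mul]
        have : k ≤ t * k := by
          calc k = 1*k := (Nat.one_mul k).symm
          _ ≤ t*k := Nat.mul_le_mul_right k ht1
        omega
      omega
    · intro ht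
      have hq : q.length = 2*t := by omega
      have := (ih t).1 hq
      omega

theorem kneser_dist (hn : 0 < n) (hk : 0 < k)
    (a b : {s : Finset (Fin (2*n+k)) // s.card = n}) :
    (KneserGraph (2*n+k) n).dist a b =
      min (2 * cdiv (n - (a.1 ∩ b.1).card) k) (2 * cdiv (a.1 ∩ b.1).card k + 1) := by
  set s := (a.1 ∩ b.1).card with hs
  have hcab : s ≤ n := by
    calc s ≤ a.1.card := Finset.card_le_card Finset.inter_subset_left
    _ = n := a.2
  have hspec1 := cdiv_spec hk (n - s)
  obtain ⟨we, hwe⟩ := walk_even hn hk (cdiv (n-s) k) a b (by omega)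
  obtain ⟨wo, hwo⟩ := walk_odd hn hk a b
  apply le_antisymm
  · apply le_min
    · exact le_trans (SimpleGraph.dist_le we) hwe
    · exact le_trans (SimpleGraph.dist_le wo) hwo
  · have hreach : (KneserGraph (2*n+k) n).Reachable a b := ⟨we⟩
    obtain ⟨p, hp⟩ := hreach.exists_walk_length_eq_dist
    rcases Nat.even_or_odd p.length with ⟨t, ht⟩ | ⟨t, ht⟩
    · have h1 := (walk_lower hn hk p t).1 (by omega)
      have h2 : cdiv (n - s) k ≤ t := (cdiv_le_iff hk).mpr (by omega)
      calc min (2 * cdiv (n - s) k) (2 * cdiv s k + 1) ≤ 2 * cdiv (n-s) k :=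
            min_le_left _ _
      _ ≤ 2*t := by omega
      _ = p.length := by omega
      _ = _ := hp
    · have h1 := (walk_lower hn hk p t).2 (by omega)
      have h2 : cdiv s k ≤ t := (cdiv_le_iff hk).mpr h1
      calc min (2 * cdiv (n - s) k) (2 * cdiv s k + 1) ≤ 2 * cdiv s k + 1 :=
            min_le_right _ _
      _ ≤ 2*t+1 := by omega
      _ = p.length := by omega
      _ = _ := hp



/-- `fv n k s` : distance in the Kneser graph between two `n`-sets meeting in `s` points. -/
def fv (n k s : ℕ) : ℕ := min (2 * cdiv (n - s) k) (2 * cdiv s k + 1)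

/-- `Mv n k` : the maximum of `fv n k s` over `0 ≤ s ≤ n` (the eccentricity). -/
def Mv (n k : ℕ) : ℕ :=
  if (n-1) % (2*k) = 0 then 2*((n-1)/(2*k))+1
  else if (n-1) % (2*k) ≤ k then 2*((n-1)/(2*k))+2
  else 2*((n-1)/(2*k))+3

lemma setup (hn : 0 < n) (hk : 0 < k) :
    ∃ Q QK r : ℕ, (n-1)/(2*k) = Q ∧ (n-1) % (2*k) = r ∧ Q*k = QK ∧
      n = 2*QK + r + 1 ∧ r < 2*k := by
  refine ⟨(n-1)/(2*k), ((n-1)/(2*k))*k, (n-1)%(2*k), rfl, rfl, rfl, ?_, ?_⟩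
  · have h1 := Nat.div_add_mod (n-1) (2*k)
    have h2 : 2*k*((n-1)/(2*k)) = 2*(((n-1)/(2*k))*k) := by ring
    omega
  · exact Nat.mod_lt _ (by omega)

lemma Mv_pos (hn : 0 < n) (hk : 0 < k) : 1 ≤ Mv n k := by
  unfold Mv; split_ifs <;> omega

lemma fv_le_Mv (hn : 0 < n) (hk : 0 < k) {s : ℕ} (hs : s ≤ n) :
    fv n k s ≤ Mv n k := by
  obtain ⟨Q, QK, r, hQ, hr, hQK, hn1, hr2⟩ := setup hn hk
  have hMv : Mv n k = (if r = 0 then 2*Q+1 else if r ≤ k then 2*Q+2 else 2*Q+3) := by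
    unfold Mv; rw [hQ, hr]
  have e3 : (Q+1)*k = QK+k := by rw [← hQK]; ring
  rw [hMv]
  unfold fv
  by_cases hr0 : r = 0
  · rw [if_pos hr0]
    rcases le_or_gt (cdiv s k) Q with h | h
    · calc min (2 * cdiv (n - s) k) (2 * cdiv s k + 1) ≤ 2 * cdiv s k + 1 :=
            min_le_right _ _
      _ ≤ 2*Q+1 := by omega
    · have h1 : QK < s := by rw [← hQK]; exact (lt_cdiv_iff hk).mp h
      have h2 : cdiv (n-s) k ≤ Q := (cdiv_le_iff hk).mpr (by omega)
      calc min (2 * cdiv (n - s) k) (2 * cdiv s k + 1) ≤ 2 * cdiv (n-s) k :=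
            min_le_left _ _
      _ ≤ 2*Q+1 := by omega
  · rw [if_neg hr0]
    by_cases hrk : r ≤ k
    · rw [if_pos hrk]
      rcases le_or_gt (cdiv (n-s) k) (Q+1) with h | h
      · calc min (2 * cdiv (n - s) k) (2 * cdiv s k + 1) ≤ 2 * cdiv (n-s) k :=
              min_le_left _ _
        _ ≤ 2*Q+2 := by omega
      · have h1 : QK + k < n - s := by rw [← e3]; exact (lt_cdiv_iff hk).mp h
        have h2 : cdiv s k ≤ Q := (cdiv_le_iff hk).mpr (by omega)
        calc min (2 * cdiv (n - s) k) (2 * cdiv s k + 1) ≤ 2 * cdiv s k + 1 :=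
              min_le_right _ _
        _ ≤ 2*Q+2 := by omega
    · rw [if_neg hrk]
      rcases le_or_gt (cdiv s k) (Q+1) with h | h
      · calc min (2 * cdiv (n - s) k) (2 * cdiv s k + 1) ≤ 2 * cdiv s k + 1 :=
              min_le_right _ _
        _ ≤ 2*Q+3 := by omega
      · have h1 : QK + k < s := by rw [← e3]; exact (lt_cdiv_iff hk).mp h
        have h2 : cdiv (n-s) k ≤ Q+1 := (cdiv_le_iff hk).mpr (by omega)
        calc min (2 * cdiv (n - s) k) (2 * cdiv s k + 1) ≤ 2 * cdiv (n-s) k :=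
              min_le_left _ _
        _ ≤ 2*Q+3 := by omega

/-- characterization of the farthest layer, pure ℕ version. -/
lemma fv_eq_Mv_iff (hn : 0 < n) (hk : 0 < k) {s : ℕ} (hs : s ≤ n) :
    fv n k s = Mv n k ↔
      (if (n-1) % (2*k) = 0 then
        ((n-1)/(2*k))*k + 1 ≤ s + k ∧ s ≤ ((n-1)/(2*k))*k
      else if (n-1) % (2*k) ≤ k then
        ((n-1)/(2*k))*k + 1 ≤ s ∧ s ≤ ((n-1)/(2*k))*k + (n-1) % (2*k)
      else
        ((n-1)/(2*k))*k + 1 ≤ s ∧ s + k ≤ ((n-1)/(2*k))*k + (n-1) % (2*k)) := by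
  obtain ⟨Q, QK, r, hQ, hr, hQK, hn1, hr2⟩ := setup hn hk
  have hMv : Mv n k = (if r = 0 then 2*Q+1 else if r ≤ k then 2*Q+2 else 2*Q+3) := by
    unfold Mv; rw [hQ, hr]
  have e3 : (Q+1)*k = QK+k := by rw [← hQK]; ring
  rw [hMv, hQ, hr, hQK]
  unfold fv
  by_cases hr0 : r = 0
  · rw [if_pos hr0, if_pos hr0]
    constructor
    · intro heq
      rcases min_eq_iff.mp heq with ⟨h1, h2⟩ | ⟨h1, h2⟩
      · omega
      · have hh : cdiv s k = Q := by omega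
        have hc := (cdiv_eq_iff hk).mp hh
        rw [hQK] at hc
        have hg : Q < cdiv (n-s) k := by omega
        have hg2 : QK < n - s := by rw [← hQK]; exact (lt_cdiv_iff hk).mp hg
        omega
    · rintro ⟨h1, h2⟩
      have hcs : cdiv s k = Q := (cdiv_eq_iff hk).mpr (by rw [hQK]; omega)
      have hg : Q < cdiv (n-s) k := (lt_cdiv_iff hk).mpr (by rw [hQK]; omega)
      rw [hcs]
      apply min_eq_right
      omega
  · rw [if_neg hr0, if_neg hr0]
    by_cases hrk : r ≤ k
    · rw [if_pos hrk, if_pos hrk]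
      constructor
      · intro heq
        rcases min_eq_iff.mp heq with ⟨h1, h2⟩ | ⟨h1, h2⟩
        · have hg : cdiv (n-s) k = Q+1 := by omega
          have hc := (cdiv_eq_iff hk).mp hg
          rw [e3] at hc
          have hh : Q < cdiv s k := by omega
          have hh2 : QK < s := by rw [← hQK]; exact (lt_cdiv_iff hk).mp hh
          omega
        · omega
      · rintro ⟨h1, h2⟩
        have hcg : cdiv (n-s) k = Q+1 := (cdiv_eq_iff hk).mpr (by rw [e3]; omega)
        have hh : Q < cdiv s k := (lt_cdiv_iff hk).mpr (by rw [hQK]; omega)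
        rw [hcg]
        apply min_eq_left
        omega
    · rw [if_neg hrk, if_neg hrk]
      constructor
      · intro heq
        rcases min_eq_iff.mp heq with ⟨h1, h2⟩ | ⟨h1, h2⟩
        · omega
        · have hh : cdiv s k = Q+1 := by omega
          have hc := (cdiv_eq_iff hk).mp hh
          rw [e3] at hc
          have hg : Q+1 < cdiv (n-s) k := by omega
          have hg2 : QK + k < n - s := by rw [← e3]; exact (lt_cdiv_iff hk).mp hg
          omega
      · rintro ⟨h1, h2⟩
        have hcs : cdiv s k = Q+1 := (cdiv_eq_iff hk).mpr (by rw [e3]; omega)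
        have hg : Q+1 < cdiv (n-s) k := (lt_cdiv_iff hk).mpr (by rw [e3]; omega)
        rw [hcs]
        apply min_eq_right
        omega

/-- lower bound on `n` in terms of values below the maximum. -/
lemma Mlb (hn : 0 < n) (hk : 0 < k) {c : ℕ} (hc : 1 ≤ c) (hlt : c < Mv n k) :
    (c-1)*k + 2 ≤ n := by
  obtain ⟨Q, QK, r, hQ, hr, hQK, hn1, hr2⟩ := setup hn hk
  have hMv : Mv n k = (if r = 0 then 2*Q+1 else if r ≤ k then 2*Q+2 else 2*Q+3) := by
    unfold Mv; rw [hQ, hr]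
  rw [hMv] at hlt
  by_cases hr0 : r = 0
  · rw [if_pos hr0] at hlt
    have hQ1 : 1 ≤ Q := by omega
    have h1 : (c-1)*k ≤ (2*Q-1)*k := Nat.mul_le_mul_right k (by omega)
    have h2 : (2*Q-1)*k = 2*QK - k := by
      rw [Nat.sub_mul, Nat.one_mul, ← hQK]; ring_nf
    have h3 : k ≤ 2*QK := by
      have : 1*k ≤ (2*Q)*k := Nat.mul_le_mul_right k (by omega)
      rw [Nat.one_mul] at this
      have e : (2*Q)*k = 2*QK := by rw [← hQK]; ring
      omega
    omega
  · rw [if_neg hr0] at hlt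
    by_cases hrk : r ≤ k
    · rw [if_pos hrk] at hlt
      have h1 : (c-1)*k ≤ (2*Q)*k := Nat.mul_le_mul_right k (by omega)
      have e : (2*Q)*k = 2*QK := by rw [← hQK]; ring
      omega
    · rw [if_neg hrk] at hlt
      have h1 : (c-1)*k ≤ (2*Q+1)*k := Nat.mul_le_mul_right k (by omega)
      have e : (2*Q+1)*k = 2*QK + k := by rw [← hQK]; ring
      omega

/-- The step lemma: from any non-farthest intersection size one can move one unit
farther, staying in the feasible window for a common neighbour. -/
lemma step (hn : 0 < n) (hk : 0 < k) {s0 : ℕ} (h0 : s0 ≤ n)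
    (hlt : fv n k s0 < Mv n k) :
    ∃ s', s' + s0 ≤ n ∧ n ≤ s' + k + s0 ∧ fv n k s' = fv n k s0 + 1 := by
  by_cases hs0n : s0 = n
  · have hz2 : cdiv 0 k = 0 := Nat.le_zero.mp ((cdiv_le_iff hk).mpr (by omega))
    have h1 : 0 < cdiv n k := (lt_cdiv_iff hk).mpr (by omega)
    refine ⟨0, by omega, by omega, ?_⟩
    unfold fv
    simp only [Nat.sub_zero, hs0n, Nat.sub_self, hz2]
    omega
  · have hs0 : s0 < n := by omega
    unfold fv at hlt ⊢
    rcases le_or_gt (2 * cdiv (n - s0) k) (2 * cdiv s0 k + 1) with hE | hO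
    · -- even case
      have hfv : min (2 * cdiv (n - s0) k) (2 * cdiv s0 k + 1) = 2 * cdiv (n-s0) k :=
        min_eq_left hE
      have hg1 : 0 < cdiv (n-s0) k := (lt_cdiv_iff hk).mpr (by omega)
      obtain ⟨GK, hGK⟩ : ∃ m, cdiv (n-s0) k * k = m := ⟨_, rfl⟩
      obtain ⟨hspec1, hspec2⟩ := cdiv_spec hk (n-s0)
      rw [hGK] at hspec1 hspec2
      have hMlb := Mlb hn hk (c := 2 * cdiv (n-s0) k) (by omega) (by omega)
      have e1 : (2 * cdiv (n-s0) k - 1)*k = 2*GK - k := by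
        rw [← hGK, Nat.sub_mul, Nat.one_mul, Nat.mul_assoc]
      rw [e1] at hMlb
      have hkGK : k ≤ GK := by
        have : 1*k ≤ cdiv (n-s0) k * k := Nat.mul_le_mul_right k (by omega)
        rw [Nat.one_mul, hGK] at this
        exact this
      refine ⟨GK + 1 - k, by omega, by omega, ?_⟩
      have hcs' : cdiv (GK + 1 - k) k = cdiv (n-s0) k := by
        rw [cdiv_eq_iff hk, hGK]
        omega
      have hcg' : cdiv (n-s0) k < cdiv (n - (GK + 1 - k)) k := by
        rw [lt_cdiv_iff hk, hGK]
        omega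
      rw [hcs', hfv, min_eq_right (by omega)]
    · -- odd case
      have hfv : min (2 * cdiv (n - s0) k) (2 * cdiv s0 k + 1) = 2 * cdiv s0 k + 1 :=
        min_eq_right (by omega)
      obtain ⟨HK, hHK⟩ : ∃ m, cdiv s0 k * k = m := ⟨_, rfl⟩
      obtain ⟨hspec1, hspec2⟩ := cdiv_spec hk s0
      rw [hHK] at hspec1 hspec2
      have hMlb := Mlb hn hk (c := 2 * cdiv s0 k + 1) (by omega) (by omega)
      have e1 : (2 * cdiv s0 k + 1 - 1)*k = 2*HK := by
        rw [Nat.add_sub_cancel, ← hHK, Nat.mul_assoc]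
      rw [e1] at hMlb
      have e3 : (cdiv s0 k + 1)*k = HK + k := by rw [← hHK]; ring
      refine ⟨max (HK+1) (n - (k + s0)), by omega, by omega, ?_⟩
      have hcg' : cdiv (n - max (HK+1) (n - (k + s0))) k = cdiv s0 k + 1 := by
        rw [cdiv_eq_iff hk, e3]
        omega
      have hcs' : cdiv s0 k < cdiv (max (HK+1) (n - (k + s0))) k := by
        rw [lt_cdiv_iff hk, hHK]
        omega
      rw [hcg', hfv, min_eq_left (by omega)]
      omega


lemma pInt_eq (hn : 0 < n) (hk : 0 < k) :
    pInt n k = if (n-1) % (2*k) = 0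
      then (((n-1)/(2*k) : ℕ) : ℤ)*(k:ℤ) - k + 1
      else (((n-1)/(2*k) : ℕ) : ℤ)*(k:ℤ) + 1 := by
  obtain ⟨Q, QK, r, hQ, hr, hQK, hn1, hr2⟩ := setup hn hk
  rw [hQ, hr]
  have h2k : (0:ℚ) < 2*k := by positivity
  have hx : ((n:ℚ) - 1) = 2*(QK:ℚ) + r := by
    have : (n:ℚ) = 2*(QK:ℚ) + (r:ℚ) + 1 := by exact_mod_cast congrArg (Nat.cast : ℕ → ℚ) hn1
    linarith
  have hQKq : (QK:ℚ) = (Q:ℚ) * (k:ℚ) := by exact_mod_cast hQK.symm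
  have hceil : ⌈((n : ℚ) - 1) / (2 * k)⌉ = (if r = 0 then (Q:ℤ) else (Q:ℤ) + 1) := by
    by_cases hr0 : r = 0
    · rw [if_pos hr0]
      rw [Int.ceil_eq_iff]
      constructor
      · rw [lt_div_iff₀ h2k, hx, hr0, hQKq]
        push_cast
        nlinarith [h2k]
      · rw [div_le_iff₀ h2k, hx, hr0, hQKq]
        push_cast
        nlinarith [h2k]
    · rw [if_neg hr0]
      have hr1 : (1:ℚ) ≤ (r:ℚ) := by exact_mod_cast Nat.one_le_iff_ne_zero.mpr hr0
      have hr2q : (r:ℚ) < 2*(k:ℚ) := by exact_mod_cast hr2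
      rw [Int.ceil_eq_iff]
      constructor
      · rw [lt_div_iff₀ h2k, hx, hQKq]
        push_cast
        nlinarith [h2k]
      · rw [div_le_iff₀ h2k, hx, hQKq]
        push_cast
        nlinarith [h2k]
  unfold pInt
  rw [hceil]
  by_cases hr0 : r = 0
  · rw [if_pos hr0, if_pos hr0]; ring
  · rw [if_neg hr0, if_neg hr0]; ring

lemma Hfun_eq (hn : 0 < n) (hk : 0 < k) :
    Hfun n k = (if (n-1)%(2*k) = 0 then k-1
      else if (n-1)%(2*k) ≤ k then (n-1)%(2*k) - 1
      else (n-1)%(2*k) - k - 1) := by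
  obtain ⟨Q, QK, r, hQ, hr, hQK, hn1, hr2⟩ := setup hn hk
  rw [hr]
  have hmod : n % k = (r+1) % k := by
    have e : (2*Q)*k = 2*QK := by rw [← hQK]; ring
    have hne : n = (r+1) + (2*Q)*k := by omega
    rw [hne, Nat.add_mul_mod_self_right]
  unfold Hfun
  rw [hmod]
  rcases Nat.lt_trichotomy (r+1) k with h | h | h
  · rw [Nat.mod_eq_of_lt h]
    split_ifs <;> omega
  · rw [h, Nat.mod_self]
    split_ifs <;> omega
  · rcases Nat.eq_or_lt_of_le (show r+1 ≤ 2*k by omega) with h2 | h2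
    · rw [h2, Nat.mul_mod_left]
      split_ifs <;> omega
    · have hme : (r+1) % k = r+1-k := by
        rw [Nat.mod_eq_sub_mod (by omega)]
        exact Nat.mod_eq_of_lt (by omega)
      rw [hme]
      split_ifs <;> omega

lemma layer_iff (hn : 0 < n) (hk : 0 < k) {s : ℕ} (hs : s ≤ n) :
    fv n k s = Mv n k ↔
      (pInt n k ≤ (s:ℤ) ∧ (s:ℤ) ≤ pInt n k + (Hfun n k : ℤ)) := by
  rw [fv_eq_Mv_iff hn hk hs, pInt_eq hn hk, Hfun_eq hn hk]
  obtain ⟨Q, QK, r, hQ, hr, hQK, hn1, hr2⟩ := setup hn hk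
  rw [hQ, hr, hQK]
  have hc : (Q:ℤ)*(k:ℤ) = (QK:ℤ) := by exact_mod_cast hQK
  by_cases hr0 : r = 0
  · rw [if_pos hr0, if_pos hr0, if_pos hr0, hc]
    omega
  · rw [if_neg hr0, if_neg hr0, if_neg hr0]
    by_cases hrk : r ≤ k
    · rw [if_pos hrk, if_pos hrk, hc]
      omega
    · rw [if_neg hrk, if_neg hrk, hc]
      omega


lemma inter_card_le (u w : {s : Finset (Fin (2*n+k)) // s.card = n}) :
    (u.1 ∩ w.1).card ≤ n := by
  calc (u.1 ∩ w.1).card ≤ u.1.card := Finset.card_le_card Finset.inter_subset_left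
  _ = n := u.2


lemma exists_nbr (hn : 0 < n) (hk : 0 < k)
    (u w : {s : Finset (Fin (2*n+k)) // s.card = n}) (s' : ℕ)
    (h1 : s' + (u.1 ∩ w.1).card ≤ n) (h2 : n ≤ s' + k + (u.1 ∩ w.1).card) :
    ∃ w' : {s : Finset (Fin (2*n+k)) // s.card = n},
      Disjoint w.1 w'.1 ∧ (u.1 ∩ w'.1).card = s' := by
  set s0 := (u.1 ∩ w.1).card with hs0
  have huw : (u.1 \ w.1).card = n - s0 := by
    have := Finset.card_sdiff_add_card_inter u.1 w.1
    rw [u.2] at this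
    omega
  obtain ⟨X, hX1, hX2⟩ := Finset.exists_subset_card_eq
    (show s' ≤ (u.1 \ w.1).card by omega)
  have hout : ((Finset.univ \ w.1) \ u.1).card = k + s0 := by
    have heq : (Finset.univ \ w.1) \ u.1 = Finset.univ \ (w.1 ∪ u.1) := by
      ext x
      simp only [Finset.mem_sdiff, Finset.mem_union, Finset.mem_univ, true_and]
      tauto
    have hcu : (w.1 ∪ u.1).card = 2*n - s0 := by
      have h3 := Finset.card_union_add_card_inter w.1 u.1
      rw [w.2, u.2, Finset.inter_comm] at h3
      omega
    rw [heq, Finset.card_sdiff_of_subset (Finset.subset_univ _), card_univ_fin, hcu]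
    omega
  obtain ⟨Y, hY1, hY2⟩ := Finset.exists_subset_card_eq
    (show n - s' ≤ ((Finset.univ \ w.1) \ u.1).card by omega)
  have hXY : Disjoint X Y := by
    rw [Finset.disjoint_left]
    intro x hx hy
    have ha := hX1 hx
    have hb := hY1 hy
    simp only [Finset.mem_sdiff] at ha hb
    exact hb.2 ha.1
  have hcardw' : (X ∪ Y).card = n := by
    rw [Finset.card_union_of_disjoint hXY, hX2, hY2]
    omega
  refine ⟨⟨X ∪ Y, hcardw'⟩, ?_, ?_⟩
  · rw [Finset.disjoint_right]
    intro x hx hxw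
    simp only [Finset.mem_union] at hx
    rcases hx with hx | hx
    · have := hX1 hx
      simp only [Finset.mem_sdiff] at this
      exact this.2 hxw
    · have := hY1 hx
      simp only [Finset.mem_sdiff, Finset.mem_univ, true_and] at this
      exact this.1 hxw
  · have : u.1 ∩ (X ∪ Y) = X := by
      ext x
      simp only [Finset.mem_inter, Finset.mem_union]
      constructor
      · rintro ⟨hxu, hx | hx⟩
        · exact hx
        · exfalso
          have := hY1 hx
          simp only [Finset.mem_sdiff] at this
          exact this.2 hxu
      · intro hx
        have := hX1 hx
        simp only [Finset.mem_sdiff] at this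
        exact ⟨this.1, Or.inl hx⟩
    rw [this, hX2]


end KneserAux

open KneserAux in
theorem geodeticNumber_le_bound
    (n k : ℕ) (hn : 0 < n) (hk : 0 < k) :
    geodeticNumber (KneserGraph (2 * n + k) n) ≤
      1 + ∑ i ∈ Finset.Icc (pInt n k) (pInt n k + (Hfun n k : ℤ)),
        zchoose n i * zchoose (n + k) ((n : ℤ) - i) := by
  classical
  set G := KneserGraph (2 * n + k) n with hG
  -- the base vertex u
  obtain ⟨U, hU1, hU2⟩ := Finset.exists_subset_card_eq
    (show n ≤ (Finset.univ : Finset (Fin (2*n+k))).card by rw [card_univ_fin]; omega)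
  set u : {s : Finset (Fin (2*n+k)) // s.card = n} := ⟨U, hU2⟩ with hu
  -- reachability
  have hreach : ∀ a b : {s : Finset (Fin (2*n+k)) // s.card = n}, G.Reachable a b := by
    intro a b
    obtain ⟨p, _⟩ := walk_even hn hk n a b (by
      calc n ≤ n * k := Nat.le_mul_of_pos_right n hk
      _ ≤ (a.1 ∩ b.1).card + n * k := Nat.le_add_left _ _)
    exact ⟨p⟩
  -- the layer finset
  set T : Finset {s : Finset (Fin (2*n+k)) // s.card = n} :=
    Finset.univ.filter (fun v => pInt n k ≤ ((u.1 ∩ v.1).card : ℤ) ∧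
      ((u.1 ∩ v.1).card : ℤ) ≤ pInt n k + (Hfun n k : ℤ)) with hT
  set W : Finset {s : Finset (Fin (2*n+k)) // s.card = n} := insert u T with hW
  have hmemT : ∀ v, v ∈ T ↔ fv n k (u.1 ∩ v.1).card = Mv n k := by
    intro v
    rw [hT, Finset.mem_filter]
    rw [layer_iff hn hk (inter_card_le u v)]
    simp
  -- the inductive claim
  have claimInd : ∀ j : ℕ, ∀ w : {s : Finset (Fin (2*n+k)) // s.card = n},
      fv n k (u.1 ∩ w.1).card + j = Mv n k →
      ∃ v, fv n k (u.1 ∩ v.1).card = Mv n k ∧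
        ∃ p : G.Walk w v, p.length ≤ j := by
    intro j
    induction j with
    | zero =>
      intro w hw
      exact ⟨w, by omega, SimpleGraph.Walk.nil, by simp⟩
    | succ j ih =>
      intro w hw
      by_cases hM : fv n k (u.1 ∩ w.1).card = Mv n k
      · exact ⟨w, hM, SimpleGraph.Walk.nil, by simp⟩
      · have hlt : fv n k (u.1 ∩ w.1).card < Mv n k :=
          lt_of_le_of_ne (fv_le_Mv hn hk (inter_card_le u w)) hM
        obtain ⟨s', hs1, hs2, hs3⟩ := step hn hk (inter_card_le u w) hlt
        obtain ⟨w', hd, hc⟩ := exists_nbr hn hk u w s' hs1 hs2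
        obtain ⟨v, hv, p, hp⟩ := ih w' (by rw [hc, hs3]; omega)
        exact ⟨v, hv, SimpleGraph.Walk.cons (adj_of_disjoint hn w w' hd) p, by
          simp only [SimpleGraph.Walk.length_cons]; omega⟩
  -- W is geodetic
  have hgeo : IsGeodeticSet G ↑W := by
    unfold IsGeodeticSet geodIntervalSet
    apply Set.eq_univ_of_forall
    intro w
    simp only [Set.mem_iUnion]
    by_cases hwW : w ∈ W
    · exact ⟨w, hwW, w, hwW, by
        simp only [geodInterval, Set.mem_setOf_eq, SimpleGraph.dist_self, Nat.add_zero]⟩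
    · have hwu : w ≠ u := fun h => hwW (by rw [h, hW]; exact Finset.mem_insert_self u T)
      have hwT : ¬ (fv n k (u.1 ∩ w.1).card = Mv n k) := fun h =>
        hwW (by rw [hW]; exact Finset.mem_insert_of_mem ((hmemT w).mpr h))
      have hlt : fv n k (u.1 ∩ w.1).card < Mv n k :=
        lt_of_le_of_ne (fv_le_Mv hn hk (inter_card_le u w)) hwT
      obtain ⟨v, hv, p, hp⟩ := claimInd (Mv n k - fv n k (u.1 ∩ w.1).card) w (by omega)
      refine ⟨u, Finset.mem_insert_self u T, v,
        Finset.mem_insert_of_mem ((hmemT v).mpr hv), ?_⟩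
      simp only [geodInterval, Set.mem_setOf_eq]
      have hduw : G.dist u w = fv n k (u.1 ∩ w.1).card := kneser_dist hn hk u w
      have hduv : G.dist u v = Mv n k := by rw [kneser_dist hn hk u v]; exact hv
      have hwv : G.dist w v ≤ Mv n k - fv n k (u.1 ∩ w.1).card :=
        le_trans (SimpleGraph.dist_le p) hp
      have htri : G.dist u v ≤ G.dist u w + G.dist w v := by
        obtain ⟨p1, hp1⟩ := (hreach u w).exists_walk_length_eq_dist
        obtain ⟨p2, hp2⟩ := (hreach w v).exists_walk_length_eq_dist
        calc G.dist u v ≤ (p1.append p2).length := SimpleGraph.dist_le _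
        _ = G.dist u w + G.dist w v := by
            rw [SimpleGraph.Walk.length_append, hp1, hp2]
      omega
  -- counting
  have hcompl : ((Finset.univ : Finset (Fin (2*n+k))) \ u.1).card = n + k := by
    rw [Finset.card_sdiff_of_subset (Finset.subset_univ _), card_univ_fin, hu]
    simp only [hU2]
    omega
  have hTcard : T.card ≤ ∑ i ∈ Finset.Icc (pInt n k) (pInt n k + (Hfun n k : ℤ)),
      zchoose n i * zchoose (n + k) ((n : ℤ) - i) := by
    have hsub : T ⊆ (Finset.Icc (pInt n k) (pInt n k + (Hfun n k : ℤ))).biUnion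
        (fun i => Finset.univ.filter
          (fun v : {s : Finset (Fin (2*n+k)) // s.card = n} =>
            ((u.1 ∩ v.1).card : ℤ) = i)) := by
      intro v hv
      rw [hT, Finset.mem_filter] at hv
      simp only [Finset.mem_biUnion, Finset.mem_Icc, Finset.mem_filter, Finset.mem_univ,
        true_and]
      exact ⟨((u.1 ∩ v.1).card : ℤ), ⟨hv.2.1, hv.2.2⟩, rfl⟩
    refine le_trans (Finset.card_le_card hsub) (le_trans (Finset.card_biUnion_le) ?_)
    apply Finset.sum_le_sum
    intro i hi
    by_cases hi0 : i < 0
    · have : (Finset.univ.filter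
          (fun v : {s : Finset (Fin (2*n+k)) // s.card = n} =>
            ((u.1 ∩ v.1).card : ℤ) = i)) = ∅ := by
        apply Finset.eq_empty_of_forall_notMem
        intro v hv
        rw [Finset.mem_filter] at hv
        omega
      rw [this]
      simp
    · push_neg at hi0
      set j := i.toNat with hj
      have hij : (j : ℤ) = i := Int.toNat_of_nonneg hi0
      by_cases hjn : n < j
      · have : (Finset.univ.filter
            (fun v : {s : Finset (Fin (2*n+k)) // s.card = n} =>
              ((u.1 ∩ v.1).card : ℤ) = i)) = ∅ := by
          apply Finset.eq_empty_of_forall_notMem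
          intro v hv
          rw [Finset.mem_filter] at hv
          have := inter_card_le u v
          omega
        rw [this]
        simp
      · push_neg at hjn
        have hz1 : zchoose n i = n.choose j := by
          rw [zchoose, if_neg (by omega)]
        have hz2 : zchoose (n+k) ((n:ℤ) - i) = (n+k).choose (n - j) := by
          rw [zchoose, if_neg (by omega)]
          congr 1
          omega
        rw [hz1, hz2]
        have hbound : (Finset.univ.filter
            (fun v : {s : Finset (Fin (2*n+k)) // s.card = n} =>
              ((u.1 ∩ v.1).card : ℤ) = i)).card ≤
            ((u.1.powersetCard j) ×ˢ ((Finset.univ \ u.1).powersetCard (n-j))).card := by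
          apply Finset.card_le_card_of_injOn (fun v => (v.1 ∩ u.1, v.1 \ u.1))
          · intro v hv
            rw [Finset.mem_coe, Finset.mem_filter] at hv
            have hcv : (u.1 ∩ v.1).card = j := by omega
            rw [Finset.mem_coe, Finset.mem_product]
            constructor
            · rw [Finset.mem_powersetCard]
              refine ⟨Finset.inter_subset_right, ?_⟩
              show (v.1 ∩ u.1).card = j
              rw [Finset.inter_comm]; exact hcv
            · rw [Finset.mem_powersetCard]
              refine ⟨?_, show (v.1 \ u.1).card = n - j from ?_⟩
              · intro x hx
                simp only [Finset.mem_sdiff, Finset.mem_univ, true_and] at hx ⊢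
                exact hx.2
              · have := Finset.card_sdiff_add_card_inter v.1 u.1
                rw [v.2, Finset.inter_comm] at this
                omega
          · intro v hv v' hv' heq
            simp only [Prod.mk.injEq] at heq
            apply Subtype.ext
            have e1 : v.1 = (v.1 ∩ u.1) ∪ (v.1 \ u.1) := by
              ext x
              simp only [Finset.mem_union, Finset.mem_inter, Finset.mem_sdiff]
              tauto
            have e2 : v'.1 = (v'.1 ∩ u.1) ∪ (v'.1 \ u.1) := by
              ext x
              simp only [Finset.mem_union, Finset.mem_inter, Finset.mem_sdiff]
              tauto
            rw [e1, e2, heq.1, heq.2]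
        refine le_trans hbound ?_
        rw [Finset.card_product, Finset.card_powersetCard, Finset.card_powersetCard,
          hcompl]
        rw [hu]
        simp only [hU2]
        exact le_rfl
  -- conclusion
  have hmem : W.card ∈ {m | ∃ S, IsGeodeticSet G S ∧ S.ncard = m} :=
    ⟨↑W, hgeo, Set.ncard_coe_finset W⟩
  refine le_trans (Nat.sInf_le hmem) ?_
  calc W.card ≤ T.card + 1 := Finset.card_insert_le u T
  _ ≤ 1 + ∑ i ∈ Finset.Icc (pInt n k) (pInt n k + (Hfun n k : ℤ)),
        zchoose n i * zchoose (n + k) ((n : ℤ) - i) := by omega
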